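/- If f : G → G' is a morphism of graph models, M is a λ-term, ρ an environment in G, and α ∈ M^G_ρ, then f(α) ∈ M^{G'}_{f∘ρ}, where (f∘ρ)(x) = f(ρ(x)) (direct image). -/
import Mathlib


/-- Untyped λ-terms in de Bruijn notation. -/
inductive Term : Type
  | var : ℕ → Term
  | app : Term → Term → Term
  | lam : Term → Term
  deriving DecidableEq

namespace Term

/-- Lifting (shifting) of de Bruijn indices at cutoff `d`. -/
def lift (d : ℕ) : Term → Term
  | var n => if n < d then var n else var (n + 1)
  | app M N => app (lift d M) (lift d N)
  | lam M => lam (lift (d + 1) M)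

/-- Capture-avoiding substitution of `s` for index `k`. -/
def subst : Term → ℕ → Term → Term
  | var n, k, s => if n = k then s else if k < n then var (n - 1) else var n
  | app M N, k, s => app (subst M k s) (subst N k s)
  | lam M, k, s => lam (subst M (k + 1) (lift 0 s))

/-- One-step β-reduction (compatible closure of the β-rule). -/
inductive Step : Term → Term → Prop
  | beta (M N : Term) : Step (app (lam M) N) (subst M 0 N)
  | appL {M M' : Term} (N : Term) : Step M M' → Step (app M N) (app M' N)
  | appR (M : Term) {N N' : Term} : Step N N' → Step (app M N) (app M N')
  | xi {M M' : Term} : Step M M' → Step (lam M) (lam M')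

/-- β-conversion: the equivalence relation generated by one-step β-reduction. -/
def BetaConv : Term → Term → Prop := Relation.EqvGen Step

/-- An effective bijective numeration of λ-terms. -/
def encodeT : Term → ℕ
  | var n => 3 * n
  | app M N => 3 * Nat.pair (encodeT M) (encodeT N) + 1
  | lam M => 3 * encodeT M + 2

/-- `ClosedUnder k M`: all free de Bruijn indices of `M` are `< k`. -/
def ClosedUnder : ℕ → Term → Prop
  | k, var n => n < k
  | k, app M N => ClosedUnder k M ∧ ClosedUnder k N
  | k, lam M => ClosedUnder (k + 1) M

/-- Closed λ-terms. -/
def Closed (M : Term) : Prop := ClosedUnder 0 M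

end Term

/-- A set of λ-terms is recursively enumerable (w.r.t. the fixed effective
numeration `encodeT`) if membership is the domain of a partial recursive function. -/
def TermRE (X : Set Term) : Prop :=
  ∃ f : ℕ →. ℕ, Nat.Partrec f ∧ ∀ M : Term, M ∈ X ↔ (f (Term.encodeT M)).Dom

/-- A set of λ-terms closed under β-conversion. -/
def BetaClosed (X : Set Term) : Prop :=
  ∀ M N : Term, M ∈ X → Term.BetaConv M N → N ∈ X

/-- Extend an environment by pushing a new value for de Bruijn index `0`. -/
def consEnv {G : Type*} (d : Set G) (ρ : ℕ → Set G) : ℕ → Set G :=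
  fun k => match k with
  | 0 => d
  | k + 1 => ρ k

/-- Interpretation of λ-terms in a graph model `(G, c)`, where `c : G* × G → G`
is the (injective, total) code map and environments send variables to subsets of `G`. -/
def ginterp {G : Type*} (c : Finset G × G → G) : Term → (ℕ → Set G) → Set G
  | Term.var n, ρ => ρ n
  | Term.app M N, ρ =>
      {α | ∃ a : Finset G, ↑a ⊆ ginterp c N ρ ∧ c (a, α) ∈ ginterp c M ρ}
  | Term.lam M, ρ =>
      {β | ∃ (a : Finset G) (α : G), β = c (a, α) ∧ α ∈ ginterp c M (consEnv ↑a ρ)}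

/-- The λ-term `δ = λx.xx`. -/
def deltaTerm : Term := Term.lam (Term.app (Term.var 0) (Term.var 0))

/-- The λ-term `Ω = (λx.xx)(λx.xx)`. -/
def omegaTerm : Term := Term.app deltaTerm deltaTerm

/-- Morphisms of graph models preserve membership in interpretations:
if `f : G → G'` is a morphism and `α ∈ M^G_ρ`, then `f(α) ∈ M^{G'}_{f∘ρ}`. -/
theorem morphism_preserves_interp {G G' : Type*} [Infinite G] [Infinite G']
    [DecidableEq G'] (c : Finset G × G → G) (c' : Finset G' × G' → G')
    (hc : Function.Injective c) (hc' : Function.Injective c')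
    (f : G → G') (hf : ∀ (a : Finset G) (α : G), f (c (a, α)) = c' (a.image f, f α))
    (M : Term) (ρ : ℕ → Set G) (α : G) (hα : α ∈ ginterp c M ρ) :
    f α ∈ ginterp c' M (fun n => f '' ρ n) := by
  induction M generalizing ρ α with
  | var n => exact ⟨α, hα, rfl⟩
  | app M N ihM ihN =>
    obtain ⟨a, ha, hm⟩ := hα
    refine ⟨a.image f, ?_, ?_⟩
    · rintro x hx
      simp only [Finset.coe_image, Set.mem_image] at hx
      obtain ⟨y, hy, rfl⟩ := hx
      exact ihN ρ y (ha hy)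
    · rw [← hf]
      exact ihM ρ _ hm
  | lam M ih =>
    obtain ⟨a, β, rfl, hβ⟩ := hα
    refine ⟨a.image f, f β, by rw [hf], ?_⟩
    have := ih (consEnv ↑a ρ) β hβ
    convert this using 2
    funext n
    cases n <;> simp [consEnv, Finset.coe_image]
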